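/- Let p be prime, k ≥ 1, and S ⊆ ℤ/p^kℤ a primitive formal-dual set. Then ν_S(1) > 0, i.e., there exist a, b ∈ S with a − b = 1. -/

import Mathlib

open Finset Complex

/-- Weight enumerator: number of ordered pairs in `S × S` with difference `y`. -/
def nuW {n : ℕ} [NeZero n] (S : Finset (ZMod n)) (y : ZMod n) : ℕ :=
  ((S ×ˢ S).filter (fun p => p.1 - p.2 = y)).card

/-- `n`-th root of unity `ζ_n = exp(2πi/n)`. -/
noncomputable def zetaC (n : ℕ) : ℂ := Complex.exp (2 * Real.pi * Complex.I / n)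

/-- Formal duality of `S, T ⊆ ℤ/nℤ` (both directions). -/
def IsFormallyDual {n : ℕ} [NeZero n] (S T : Finset (ZMod n)) : Prop :=
  S.Nonempty ∧ T.Nonempty ∧
  (∀ y : ZMod n, ((S.card : ℂ) ^ 2 / (T.card : ℂ)) * (nuW T y : ℂ) =
    ∑ v : ZMod n, (nuW S v : ℂ) * zetaC n ^ (v.val * y.val)) ∧
  (∀ y : ZMod n, ((T.card : ℂ) ^ 2 / (S.card : ℂ)) * (nuW S y : ℂ) =
    ∑ v : ZMod n, (nuW T v : ℂ) * zetaC n ^ (v.val * y.val))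

/-- `S` is contained in a coset of a proper (additive) subgroup. -/
def InProperCoset {m : ℕ} [NeZero m] (S : Finset (ZMod m)) : Prop :=
  ∃ H : AddSubgroup (ZMod m), H ≠ ⊤ ∧ ∃ c : ZMod m, ∀ x ∈ S, x - c ∈ H

open Polynomial
lemma zetaC_prim (n : ℕ) (hn : n ≠ 0) : IsPrimitiveRoot (zetaC n) n := by
  simpa [zetaC] using Complex.isPrimitiveRoot_exp n hn

lemma zetaC_pow_mod (n : ℕ) (hn : n ≠ 0) (a : ℕ) : zetaC n ^ a = zetaC n ^ (a % n) := by
  conv_lhs => rw [← Nat.mod_add_div a n, pow_add, pow_mul, (zetaC_prim n hn).pow_eq_one,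
    one_pow, mul_one]

lemma core (n : ℕ+) (c : ZMod (n:ℕ) → ℕ) (R : ℚ) (u : (ZMod (n:ℕ))ˣ) (w : ZMod (n:ℕ) → ZMod (n:ℕ))
    (h : ∑ v : ZMod (n:ℕ), (c v : ℂ) * zetaC n ^ (w v).val = (R : ℂ)) :
    ∑ v : ZMod (n:ℕ), (c v : ℂ) * zetaC n ^ ((u : ZMod (n:ℕ)) * w v).val = (R : ℂ) := by
  have hn0 : (n:ℕ) ≠ 0 := n.pos.ne'
  haveI : NeZero (n:ℕ) := ⟨hn0⟩
  set K := CyclotomicField n ℚ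
  haveI : NeZero ((n:ℕ) : ℚ) := ⟨by exact_mod_cast hn0⟩
  haveI : IsCyclotomicExtension {(n:ℕ)} ℚ K := CyclotomicField.isCyclotomicExtension (n:ℕ) ℚ
  set z : K := IsCyclotomicExtension.zeta n ℚ K with hzdef
  have hzprim : IsPrimitiveRoot z n := IsCyclotomicExtension.zeta_spec n ℚ K
  let pb : PowerBasis ℚ K := hzprim.powerBasis ℚ
  have hgen : pb.gen = z := hzprim.powerBasis_gen ℚ
  have hmin : minpoly ℚ pb.gen = cyclotomic n ℚ := by
    rw [hgen]; exact (cyclotomic_eq_minpoly_rat hzprim n.pos).symm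
  have hζ : IsPrimitiveRoot (zetaC n) n := zetaC_prim n hn0
  set m : ℕ := ((u : ZMod (n:ℕ))).val with hmdef
  have hm : Nat.Coprime m n := ZMod.val_coe_unit_coprime u
  have hζu : IsPrimitiveRoot (zetaC n ^ m) n := hζ.pow_of_coprime m hm
  have root : ∀ x : ℂ, IsPrimitiveRoot x n → aeval x (minpoly ℚ pb.gen) = 0 := by
    intro x hx
    rw [hmin, aeval_def, ← eval_map, map_cyclotomic]
    exact hx.isRoot_cyclotomic n.pos
  let φ₁ : K →ₐ[ℚ] ℂ := pb.lift (zetaC n) (root _ hζ)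
  let φ₂ : K →ₐ[ℚ] ℂ := pb.lift (zetaC n ^ m) (root _ hζu)
  have hφ₁z : φ₁ z = zetaC n := by rw [← hgen]; exact pb.lift_gen _ _
  have hφ₂z : φ₂ z = zetaC n ^ m := by rw [← hgen]; exact pb.lift_gen _ _
  set X : K := ∑ v : ZMod (n:ℕ), (c v : K) * z ^ (w v).val with hXdef
  have hφ₁X : φ₁ X = (R : ℂ) := by
    rw [hXdef, map_sum, ← h]
    refine Finset.sum_congr rfl fun v _ => ?_
    rw [map_mul, map_pow, hφ₁z, map_natCast]
  have hX : X = algebraMap ℚ K R := by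
    apply RingHom.injective (φ₁ : K →+* ℂ)
    show φ₁ X = φ₁ (algebraMap ℚ K R)
    rw [hφ₁X]
    simp [AlgHom.commutes, eq_ratCast]
  have hφ₂X : φ₂ X = (R : ℂ) := by
    rw [hX]; simp [AlgHom.commutes, eq_ratCast]
  rw [hXdef, map_sum] at hφ₂X
  rw [← hφ₂X]
  refine Finset.sum_congr rfl fun v _ => ?_
  rw [map_mul, map_pow, hφ₂z, map_natCast, ← pow_mul, zetaC_pow_mod n hn0 (m * (w v).val),
    ← ZMod.val_mul]

lemma exists_unit_diff (p k : ℕ) [hp : Fact p.Prime] (hk : 1 ≤ k) [NeZero (p^k)]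
    (S : Finset (ZMod (p^k))) (hS : S.Nonempty) (hnp : ¬ InProperCoset S) :
    ∃ a ∈ S, ∃ b ∈ S, IsUnit (a - b) := by
  by_contra hcon
  push_neg at hcon
  apply hnp
  obtain ⟨c, hc⟩ := hS
  refine ⟨AddSubgroup.zmultiples (p : ZMod (p^k)), ?_, c, ?_⟩
  · intro htop
    have h1 : (1 : ZMod (p^k)) ∈ AddSubgroup.zmultiples (p : ZMod (p^k)) := htop ▸ trivial
    obtain ⟨t, ht⟩ := AddSubgroup.mem_zmultiples_iff.mp h1
    have hup : IsUnit ((p : ℕ) : ZMod (p^k)) := by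
      apply IsUnit.of_mul_eq_one ((t : ZMod (p^k)))
      rw [← ht, zsmul_eq_mul]; ring
    rw [ZMod.isUnit_iff_coprime] at hup
    have : ¬ Nat.Coprime p (p^k) := by
      rw [Nat.Prime.coprime_iff_not_dvd hp.out, not_not]
      exact dvd_pow_self p (by omega)
    exact this hup
  · intro x hx
    have hnu : ¬ IsUnit (x - c) := hcon x hx c hc
    have hvd : p ∣ (x - c).val := by
      by_contra hnd
      apply hnu
      have hcop : Nat.Coprime (x - c).val (p^k) :=
        Nat.Coprime.pow_right k (((Nat.Prime.coprime_iff_not_dvd hp.out).mpr hnd).symm)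
      have := (ZMod.isUnit_iff_coprime (x - c).val (p^k)).mpr hcop
      rwa [ZMod.natCast_val, ZMod.cast_id] at this
    obtain ⟨t, ht⟩ := hvd
    refine AddSubgroup.mem_zmultiples_iff.mpr ⟨(t : ℤ), ?_⟩
    rw [zsmul_eq_mul]
    have : x - c = (((x - c).val : ℕ) : ZMod (p^k)) := by rw [ZMod.natCast_val, ZMod.cast_id]
    rw [this, ht]
    push_cast; ring

theorem stmt15 (p k : ℕ) [Fact p.Prime] (hk : 1 ≤ k) (S T' : Finset (ZMod (p ^ k)))
    (hST' : IsFormallyDual S T') (hSnp : ¬ InProperCoset S) (hT'np : ¬ InProperCoset T') :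
    0 < nuW S 1 := by
  obtain ⟨hSne, hTne, _h1, h2⟩ := hST'
  have hn0 : p ^ k ≠ 0 := pow_ne_zero k (Fact.out : p.Prime).pos.ne'
  set N : ℕ+ := ⟨p ^ k, Nat.pos_of_ne_zero hn0⟩ with hN
  obtain ⟨a, ha, b, hb, hu⟩ := exists_unit_diff p k hk S hSne hSnp
  obtain ⟨u, hud⟩ := hu
  -- the constant
  set C : ℂ := (T'.card : ℂ) ^ 2 / (S.card : ℂ) with hC
  have hCne : C ≠ 0 := div_ne_zero (pow_ne_zero _ (Nat.cast_ne_zero.mpr hTne.card_pos.ne'))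
    (Nat.cast_ne_zero.mpr hSne.card_pos.ne')
  set R : ℚ := (T'.card : ℚ) ^ 2 * (nuW S 1 : ℚ) / (S.card : ℚ) with hR
  have hRC : (R : ℂ) = C * (nuW S 1 : ℂ) := by
    rw [hR, hC]; push_cast; ring
  have key : ∀ y : ZMod (p ^ k), C * (nuW S y : ℂ) =
      ∑ v : ZMod (p ^ k), (nuW T' v : ℂ) * zetaC (p ^ k) ^ ((v * y).val) := by
    intro y
    rw [hC, h2 y]
    refine Finset.sum_congr rfl fun v _ => ?_
    rw [zetaC_pow_mod _ hn0 (v.val * y.val), ← ZMod.val_mul]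
  have hcore := core N (nuW T') R u (fun v => v * 1) (by
    show ∑ v : ZMod (p ^ k), (nuW T' v : ℂ) * zetaC (p ^ k) ^ ((v * 1).val) = (R : ℂ)
    rw [← key 1, hRC])
  have h3 : ∑ v : ZMod (p ^ k), (nuW T' v : ℂ) * zetaC (p ^ k) ^ ((v * (u : ZMod (p ^ k))).val)
      = (R : ℂ) := by
    rw [← hcore]
    refine Finset.sum_congr rfl fun v _ => ?_
    have : v * (u : ZMod (p ^ k)) = (u : ZMod (p ^ k)) * (v * 1) := by ring
    rw [this]
    rfl
  have h4 : C * (nuW S (u : ZMod (p ^ k)) : ℂ) = C * (nuW S 1 : ℂ) := by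
    rw [key (u : ZMod (p ^ k)), h3, hRC]
  have h5 : nuW S ((u : ZMod (p ^ k))) = nuW S 1 :=
    Nat.cast_inj.mp (mul_left_cancel₀ hCne h4)
  rw [← h5, hud]
  apply Finset.card_pos.mpr
  exact ⟨(a, b), by simp [Finset.mem_filter, Finset.mem_product, ha, hb]⟩
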